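/- Let η ∈ ℂ with |η| ≤ 1. Then for every θ = (θ₁, θ₂) ∈ ℝ², |a(η) + b(η)cos θ₁ + b(η)cos θ₂ + c(η)cos θ₁ cos θ₂| ≤ 23/15. Consequently, for h > 0, λ ∈ ℂ with |λh²| ≤ 1, and ω ∈ ℝ, the supremum over θ ∈ ℝ² of |ω·λ·M̃(θ)|, where M̃(θ) = h²(a(λh²) + b(λh²)cos θ₁ + b(λh²)cos θ₂ + c(λh²)cos θ₁ cos θ₂), is at most (23/15)·|ω|·|λ|·h². -/

import Mathlib

noncomputable def aη (η : ℂ) : ℂ := (1/4) * (1/(2+η) + 2/(4+η) + 1/(6+η))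
noncomputable def bη (η : ℂ) : ℂ := (1/4) * (1/(2+η) - 1/(6+η))
noncomputable def cη (η : ℂ) : ℂ := (1/4) * (1/(2+η) - 2/(4+η) + 1/(6+η))

/-- Symbol of the additive element-wise Vanka smoother. -/
noncomputable def Msym (h : ℝ) (lam : ℂ) (θ : ℝ × ℝ) : ℂ :=
  (h:ℂ)^2 * (aη (lam * (h:ℂ)^2) + bη (lam * (h:ℂ)^2) * Real.cos θ.1
    + bη (lam * (h:ℂ)^2) * Real.cos θ.2
    + cη (lam * (h:ℂ)^2) * (Real.cos θ.1 * Real.cos θ.2))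

lemma key_bound (η : ℂ) (hη : ‖η‖ ≤ 1) (θ : ℝ × ℝ) :
    ‖aη η + bη η * Real.cos θ.1 + bη η * Real.cos θ.2
      + cη η * (Real.cos θ.1 * Real.cos θ.2)‖ ≤ 23/15 := by
  set x : ℝ := Real.cos θ.1 with hxdef
  set y : ℝ := Real.cos θ.2 with hydef
  have hx1 : x ≤ 1 := Real.cos_le_one _
  have hx2 : (-1:ℝ) ≤ x := Real.neg_one_le_cos _
  have hy1 : y ≤ 1 := Real.cos_le_one _
  have hy2 : (-1:ℝ) ≤ y := Real.neg_one_le_cos _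
  have h2 : (1:ℝ) ≤ ‖2+η‖ := by
    have h := norm_add_le (2+η) (-η)
    simp only [add_neg_cancel_right, norm_neg] at h
    have : ‖(2:ℂ)‖ = 2 := by norm_num [Complex.norm_two]
    linarith
  have h4 : (3:ℝ) ≤ ‖4+η‖ := by
    have h := norm_add_le (4+η) (-η)
    simp only [add_neg_cancel_right, norm_neg] at h
    have : ‖(4:ℂ)‖ = 4 := by
      have : ((4:ℂ)) = ((4:ℝ):ℂ) := by norm_num
      rw [this, Complex.norm_real, Real.norm_eq_abs]; norm_num
    linarith
  have h6 : (5:ℝ) ≤ ‖6+η‖ := by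
    have h := norm_add_le (6+η) (-η)
    simp only [add_neg_cancel_right, norm_neg] at h
    have : ‖(6:ℂ)‖ = 6 := by
      have : ((6:ℂ)) = ((6:ℝ):ℂ) := by norm_num
      rw [this, Complex.norm_real, Real.norm_eq_abs]; norm_num
    linarith
  have hne2 : (2+η) ≠ 0 := by
    intro hz; rw [hz] at h2; simp at h2; linarith
  have hne4 : (4+η) ≠ 0 := by
    intro hz; rw [hz] at h4; simp at h4; linarith
  have hne6 : (6+η) ≠ 0 := by
    intro hz; rw [hz] at h6; simp at h6; linarith
  have heq : aη η + bη η * x + bη η * y + cη η * (x*y)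
      = (((1+x)*(1+y) : ℝ) : ℂ)/(4*(2+η)) + (((1-x*y) : ℝ) : ℂ)/(2*(4+η))
        + (((1-x)*(1-y) : ℝ) : ℂ)/(4*(6+η)) := by
    have ha : aη η = 1/(4*(2+η)) + 1/(2*(4+η)) + 1/(4*(6+η)) := by
      unfold aη; field_simp; ring
    have hb : bη η = 1/(4*(2+η)) - 1/(4*(6+η)) := by
      unfold bη; field_simp
    have hc : cη η = 1/(4*(2+η)) - 1/(2*(4+η)) + 1/(4*(6+η)) := by
      unfold cη; field_simp; ring
    rw [ha, hb, hc]
    push_cast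
    ring
  rw [heq]
  have t1 : ‖(((1+x)*(1+y) : ℝ) : ℂ)/(4*(2+η))‖ ≤ 1 := by
    rw [norm_div, Complex.norm_real, Real.norm_eq_abs, norm_mul]
    have hnum : |(1+x)*(1+y)| ≤ 4 := by
      rw [abs_mul]
      have : |1+x| ≤ 2 := by rw [abs_le]; constructor <;> linarith
      have h2' : |1+y| ≤ 2 := by rw [abs_le]; constructor <;> linarith
      nlinarith [abs_nonneg (1+x), abs_nonneg (1+y)]
    have habs4 : ‖(4:ℂ)‖ = 4 := by
      have : ((4:ℂ)) = ((4:ℝ):ℂ) := by norm_num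
      rw [this, Complex.norm_real, Real.norm_eq_abs]; norm_num
    rw [habs4]
    rw [div_le_one (by linarith)]
    nlinarith
  have t2 : ‖(((1-x*y) : ℝ) : ℂ)/(2*(4+η))‖ ≤ 1/3 := by
    rw [norm_div, Complex.norm_real, Real.norm_eq_abs, norm_mul]
    have hnum : |1-x*y| ≤ 2 := by
      rw [abs_le]; constructor <;> nlinarith
    have habs2 : ‖(2:ℂ)‖ = 2 := by norm_num [Complex.norm_two]
    rw [habs2, div_le_div_iff₀ (by linarith) (by norm_num)]
    nlinarith
  have t3 : ‖(((1-x)*(1-y) : ℝ) : ℂ)/(4*(6+η))‖ ≤ 1/5 := by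
    rw [norm_div, Complex.norm_real, Real.norm_eq_abs, norm_mul]
    have hnum : |(1-x)*(1-y)| ≤ 4 := by
      rw [abs_mul]
      have : |1-x| ≤ 2 := by rw [abs_le]; constructor <;> linarith
      have h2' : |1-y| ≤ 2 := by rw [abs_le]; constructor <;> linarith
      nlinarith [abs_nonneg (1-x), abs_nonneg (1-y)]
    have habs4 : ‖(4:ℂ)‖ = 4 := by
      have : ((4:ℂ)) = ((4:ℝ):ℂ) := by norm_num
      rw [this, Complex.norm_real, Real.norm_eq_abs]; norm_num
    rw [habs4, div_le_div_iff₀ (by linarith) (by norm_num)]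
    nlinarith
  calc ‖_‖ ≤ ‖(((1+x)*(1+y) : ℝ) : ℂ)/(4*(2+η)) + (((1-x*y) : ℝ) : ℂ)/(2*(4+η))‖
        + ‖(((1-x)*(1-y) : ℝ) : ℂ)/(4*(6+η))‖ := norm_add_le _ _
    _ ≤ ‖(((1+x)*(1+y) : ℝ) : ℂ)/(4*(2+η))‖ + ‖(((1-x*y) : ℝ) : ℂ)/(2*(4+η))‖
        + ‖(((1-x)*(1-y) : ℝ) : ℂ)/(4*(6+η))‖ := by
          gcongr; exact norm_add_le _ _
    _ ≤ 1 + 1/3 + 1/5 := by gcongr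
    _ = 23/15 := by norm_num

theorem stmt_11 :
    (∀ η : ℂ, ‖η‖ ≤ 1 → ∀ θ : ℝ × ℝ,
      ‖aη η + bη η * Real.cos θ.1 + bη η * Real.cos θ.2
        + cη η * (Real.cos θ.1 * Real.cos θ.2)‖ ≤ 23/15) ∧
    (∀ (h : ℝ), 0 < h → ∀ lam : ℂ, ‖lam * (h:ℂ)^2‖ ≤ 1 → ∀ ω : ℝ,
      ∀ θ : ℝ × ℝ,
        ‖(ω:ℂ) * lam * Msym h lam θ‖ ≤
          (23/15) * |ω| * ‖lam‖ * h^2) := by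
  constructor
  · exact key_bound
  · intro h hh lam hlam ω θ
    have hk := key_bound (lam * (h:ℂ)^2) hlam θ
    unfold Msym
    rw [norm_mul, norm_mul, norm_mul, Complex.norm_real, Real.norm_eq_abs]
    have habsh : ‖(h:ℂ)^2‖ = h^2 := by
      rw [norm_pow, Complex.norm_real, Real.norm_eq_abs, sq_abs]
    rw [habsh]
    calc |ω| * ‖lam‖ * (h^2 * ‖_‖)
        ≤ |ω| * ‖lam‖ * (h^2 * (23/15)) := by
          gcongr
      _ = 23/15 * |ω| * ‖lam‖ * h^2 := by ring
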